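/- arXiv:1711.06219 — 6 statements merged into one kernel-verified Lean document; each statement's English description precedes it below -/
import Mathlib

section
/- Fix an integer q ≥ 1 and real constants t > 0 and C > 0. For n > 1 define α_n = C · (t + q·log n)^{q/2 − 1} / (2^{q/2 − 1} · n^{q/2} · Γ(q/2)), where Γ is the real Gamma function, and define the stabilizing function g(n) = (2n / (t + q·log n))^{q/2} · Γ(q/2) / e. Then lim_{n → ∞} B_L(α_n) · g(n) = C; in particular, when C = 1 the product B_L(α_n)·g(n) converges to 1 as n → ∞. -/
open Filter Real

/-- The Adaptive Robust Lower Bound calibration: for the adaptive α level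
`α_n = C * (t + q log n)^{q/2-1} / (2^{q/2-1} n^{q/2} Γ(q/2))` and the stabilizing
function `g(n) = (2n/(t + q log n))^{q/2} Γ(q/2)/e`, the product
`B_L(α_n) * g(n)` converges to `C` as `n → ∞`, where `B_L(p) = -e p log p`. -/
theorem arlb_calibration (q : ℕ) (hq : 1 ≤ q) (t C : ℝ) (ht : 0 < t) (hC : 0 < C) :
    Filter.Tendsto (fun n : ℕ =>
      (fun α : ℝ => -Real.exp 1 * α * Real.log α)
          (C * (t + q * Real.log n) ^ ((q : ℝ) / 2 - 1) /
            ((2 : ℝ) ^ ((q : ℝ) / 2 - 1) * (n : ℝ) ^ ((q : ℝ) / 2) * Real.Gamma ((q : ℝ) / 2))) *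
        ((2 * (n : ℝ) / (t + q * Real.log n)) ^ ((q : ℝ) / 2) * Real.Gamma ((q : ℝ) / 2) /
          Real.exp 1))
      Filter.atTop (nhds C) := by
  have hq0 : (0 : ℝ) < (q : ℝ) := by exact_mod_cast Nat.lt_of_lt_of_le Nat.zero_lt_one hq
  set s : ℝ := (q : ℝ) / 2 with hs
  have hs0 : 0 < s := by positivity
  have hΓ : 0 < Real.Gamma s := Real.Gamma_pos_of_pos hs0
  set L : ℕ → ℝ := fun n => t + q * Real.log n with hLdef
  set K : ℝ := -2 * Real.log C + ((q : ℝ) - 2) * Real.log 2 + 2 * Real.log (Real.Gamma s)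
    with hK
  set F : ℕ → ℝ := fun n =>
    K / L n - ((q : ℝ) - 2) * (Real.log (L n) / L n) + (1 - t / L n) with hF
  -- L tends to atTop
  have hLtop : Tendsto L atTop atTop := by
    apply tendsto_atTop_add_const_left
    exact (Real.tendsto_log_atTop.const_mul_atTop hq0).comp tendsto_natCast_atTop_atTop
  -- F tends to 1
  have hFlim : Tendsto F atTop (nhds 1) := by
    have h1 : Tendsto (fun n => K / L n) atTop (nhds 0) :=
      tendsto_const_nhds.div_atTop hLtop
    have h2 : Tendsto (fun n => Real.log (L n) / L n) atTop (nhds 0) :=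
      (Real.isLittleO_log_id_atTop.tendsto_div_nhds_zero).comp hLtop
    have h3 : Tendsto (fun n => 1 - t / L n) atTop (nhds 1) := by
      have := tendsto_const_nhds (x := (1:ℝ)) (f := atTop (α := ℕ))
      simpa using this.sub (tendsto_const_nhds.div_atTop hLtop)
    have := ((h1.sub (h2.const_mul ((q : ℝ) - 2))).add h3)
    simpa using this
  have hmain : Tendsto (fun n => C * F n) atTop (nhds C) := by
    simpa using (tendsto_const_nhds (x := C) (f := atTop (α := ℕ))).mul hFlim
  refine Filter.Tendsto.congr' ?_ hmain
  -- the main function eventually equals C * F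
  filter_upwards [eventually_ge_atTop 2] with n hn
  have hn1 : (1 : ℝ) ≤ (n : ℝ) := by exact_mod_cast Nat.one_le_of_lt hn
  have hnpos : (0 : ℝ) < (n : ℝ) := lt_of_lt_of_le one_pos hn1
  have hlogn : 0 ≤ Real.log n := Real.log_nonneg hn1
  have hLpos : 0 < L n := by
    have : 0 ≤ (q : ℝ) * Real.log n := by positivity
    simp only [hLdef]; linarith
  have he : (0:ℝ) < Real.exp 1 := Real.exp_pos 1
  show C * F n = -Real.exp 1 *
      (C * L n ^ (s - 1) / ((2:ℝ) ^ (s - 1) * (n:ℝ) ^ s * Real.Gamma s)) *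
      Real.log (C * L n ^ (s - 1) / ((2:ℝ) ^ (s - 1) * (n:ℝ) ^ s * Real.Gamma s)) *
      ((2 * (n:ℝ) / L n) ^ s * Real.Gamma s / Real.exp 1)
  set A : ℝ := C * L n ^ (s - 1) / ((2:ℝ) ^ (s - 1) * (n:ℝ) ^ s * Real.Gamma s) with hAdef
  have h2s : (0:ℝ) < (2:ℝ) ^ s := Real.rpow_pos_of_pos two_pos s
  have hns : (0:ℝ) < (n:ℝ) ^ s := Real.rpow_pos_of_pos hnpos s
  have hLs : (0:ℝ) < L n ^ s := Real.rpow_pos_of_pos hLpos s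
  have hLs1 : (0:ℝ) < L n ^ (s - 1) := Real.rpow_pos_of_pos hLpos (s - 1)
  have h2s1 : (0:ℝ) < (2:ℝ) ^ (s - 1) := Real.rpow_pos_of_pos two_pos (s - 1)
  -- key product identity : A * g n = 2*C/(L n * e)
  have hkey : A * ((2 * (n : ℝ) / L n) ^ s * Real.Gamma s / Real.exp 1)
      = 2 * C / (L n * Real.exp 1) := by
    have e1 : (2 * (n : ℝ) / L n) ^ s = 2 ^ s * (n : ℝ) ^ s / L n ^ s := by
      rw [Real.div_rpow (by positivity) hLpos.le, Real.mul_rpow (by norm_num) hnpos.le]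
    have e2 : L n ^ (s - 1) = L n ^ s / L n := Real.rpow_sub_one hLpos.ne' s
    have e3 : (2 : ℝ) ^ (s - 1) = 2 ^ s / 2 := Real.rpow_sub_one two_ne_zero s
    rw [hAdef, e1, e2, e3]
    field_simp
  -- expand log A
  have hlogA : Real.log A = Real.log C + (s - 1) * Real.log (L n)
      - ((s - 1) * Real.log 2 + s * Real.log n + Real.log (Real.Gamma s)) := by
    rw [hAdef, Real.log_div (by positivity) (by positivity),
      Real.log_mul (by positivity : ((2:ℝ) ^ (s-1) * (n:ℝ) ^ s) ≠ 0) hΓ.ne',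
      Real.log_mul h2s1.ne' hns.ne',
      Real.log_mul hC.ne' hLs1.ne',
      Real.log_rpow hLpos, Real.log_rpow two_pos, Real.log_rpow hnpos]
  have hqlog : (q : ℝ) * Real.log n = L n - t := by
    simp only [hLdef]; ring
  have step : -Real.exp 1 * A * Real.log A *
      ((2 * (n : ℝ) / L n) ^ s * Real.Gamma s / Real.exp 1)
      = -Real.exp 1 * Real.log A * (2 * C / (L n * Real.exp 1)) := by
    rw [← hkey]; ring
  rw [step]
  have hFn : F n = (K - ((q:ℝ) - 2) * Real.log (L n) + (L n - t)) / L n := by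
    simp only [hF]
    field_simp
  rw [hFn, hlogA, hK, hs, mul_div_assoc', div_eq_iff hLpos.ne']
  field_simp
  linear_combination (C * Real.exp 1) * hqlog
end

section
/- Fix an integer q ≥ 1 and a real W > 0. For every integer n ≥ 2, the Lebesgue measure of the set {u ∈ (0, 1/e) : B_L(u) · (n / log n)^{q/2} ≤ W} is at most (W/e) · (log n / n)^{q/2}. Consequently, if U is uniformly distributed on (0,1) (the distribution of the p-value under the null hypothesis), the probability that B_L(U)·(n/log n)^{q/2} ≤ W and U < 1/e tends to 0 as n → ∞. -/
open MeasureTheory Filter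

/-- Null-hypothesis half of large sample consistency of the ARLB. For `q ≥ 1` and
`W > 0`: (a) for each `n ≥ 2` the Lebesgue measure of the set of
`u ∈ (0, 1/e)` with `B_L(u) (n/log n)^{q/2} ≤ W` is at most
`(W/e) (log n / n)^{q/2}`, where `B_L(u) = -e u log u`; (b) consequently, for `U`
uniform on `(0,1)` (the null distribution of the p-value), the probability that
`B_L(U) (n/log n)^{q/2} ≤ W` and `U < 1/e` tends to `0` as `n → ∞`. -/
theorem arlb_null_consistency (q : ℕ) (hq : 1 ≤ q) (W : ℝ) (hW : 0 < W) :
    (∀ n : ℕ, 2 ≤ n →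
      volume {u : ℝ | u ∈ Set.Ioo 0 (1 / Real.exp 1) ∧
          (-Real.exp 1 * u * Real.log u) * ((n : ℝ) / Real.log n) ^ ((q : ℝ) / 2) ≤ W} ≤
        ENNReal.ofReal ((W / Real.exp 1) * (Real.log n / n) ^ ((q : ℝ) / 2))) ∧
    Tendsto (fun n : ℕ =>
        volume {u : ℝ | u ∈ Set.Ioo 0 1 ∧
          (-Real.exp 1 * u * Real.log u) * ((n : ℝ) / Real.log n) ^ ((q : ℝ) / 2) ≤ W ∧
          u < 1 / Real.exp 1})
      atTop (nhds 0) := by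
  have hbound : ∀ n : ℕ, 2 ≤ n →
      volume {u : ℝ | u ∈ Set.Ioo 0 (1 / Real.exp 1) ∧
          (-Real.exp 1 * u * Real.log u) * ((n : ℝ) / Real.log n) ^ ((q : ℝ) / 2) ≤ W} ≤
        ENNReal.ofReal ((W / Real.exp 1) * (Real.log n / n) ^ ((q : ℝ) / 2)) := by
    intro n hn
    have hn1 : (1 : ℝ) < n := by exact_mod_cast Nat.lt_of_lt_of_le one_lt_two hn
    have hnpos : (0 : ℝ) < n := lt_trans one_pos hn1
    have hlog : 0 < Real.log n := Real.log_pos hn1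
    set c : ℝ := ((n : ℝ) / Real.log n) ^ ((q : ℝ) / 2) with hc_def
    have hc : 0 < c := Real.rpow_pos_of_pos (div_pos hnpos hlog) _
    have hrw : (Real.log n / (n : ℝ)) ^ ((q : ℝ) / 2) = c⁻¹ := by
      rw [show Real.log n / (n : ℝ) = ((n : ℝ) / Real.log n)⁻¹ by rw [inv_div]]
      exact Real.inv_rpow (le_of_lt (div_pos hnpos hlog)) _
    have hsub : {u : ℝ | u ∈ Set.Ioo 0 (1 / Real.exp 1) ∧
          (-Real.exp 1 * u * Real.log u) * c ≤ W} ⊆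
        Set.Ioc 0 ((W / Real.exp 1) * c⁻¹) := by
      rintro u ⟨⟨hu0, hue⟩, hle⟩
      have hlogu : Real.log u < -1 := by
        have h := Real.log_lt_log hu0 hue
        rwa [one_div, Real.log_inv, Real.log_exp] at h
      have hE : 0 < Real.exp 1 := Real.exp_pos 1
      have h1 : Real.exp 1 * u ≤ -Real.exp 1 * u * Real.log u := by
        nlinarith [mul_pos hE hu0]
      have h2 : Real.exp 1 * u * c ≤ W :=
        le_trans (mul_le_mul_of_nonneg_right h1 hc.le) hle
      have h3 : u ≤ W / Real.exp 1 * c⁻¹ := by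
        rw [div_mul_eq_mul_div, le_div_iff₀ hE]
        have hcinv : c⁻¹ * c = 1 := inv_mul_cancel₀ hc.ne'
        nlinarith [hc, hcinv, h2]
      exact ⟨hu0, h3⟩
    calc volume {u : ℝ | u ∈ Set.Ioo 0 (1 / Real.exp 1) ∧
          (-Real.exp 1 * u * Real.log u) * c ≤ W}
        ≤ volume (Set.Ioc 0 ((W / Real.exp 1) * c⁻¹)) := measure_mono hsub
      _ = ENNReal.ofReal ((W / Real.exp 1) * c⁻¹) := by rw [Real.volume_Ioc, sub_zero]
      _ = ENNReal.ofReal ((W / Real.exp 1) * (Real.log n / n) ^ ((q : ℝ) / 2)) := by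
          rw [hrw]
  refine ⟨hbound, ?_⟩
  have hsetEq : ∀ n : ℕ,
      {u : ℝ | u ∈ Set.Ioo 0 1 ∧
          (-Real.exp 1 * u * Real.log u) * ((n : ℝ) / Real.log n) ^ ((q : ℝ) / 2) ≤ W ∧
          u < 1 / Real.exp 1} =
      {u : ℝ | u ∈ Set.Ioo 0 (1 / Real.exp 1) ∧
          (-Real.exp 1 * u * Real.log u) * ((n : ℝ) / Real.log n) ^ ((q : ℝ) / 2) ≤ W} := by
    intro n
    ext u
    have he1 : 1 / Real.exp 1 < 1 := by
      rw [div_lt_one (Real.exp_pos 1)]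
      exact lt_of_lt_of_le one_lt_two (by
        have := Real.add_one_le_exp (1 : ℝ); linarith)
    constructor
    · rintro ⟨⟨h0, _⟩, hle, hlt⟩; exact ⟨⟨h0, hlt⟩, hle⟩
    · rintro ⟨⟨h0, hlt⟩, hle⟩; exact ⟨⟨h0, lt_trans hlt he1⟩, hle, hlt⟩
  have hub : Tendsto (fun n : ℕ =>
      ENNReal.ofReal ((W / Real.exp 1) * (Real.log n / n) ^ ((q : ℝ) / 2)))
      atTop (nhds 0) := by
    have hld : Tendsto (fun n : ℕ => Real.log n / n) atTop (nhds 0) :=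
      (Real.isLittleO_log_id_atTop.tendsto_div_nhds_zero).comp tendsto_natCast_atTop_atTop
    have hq2 : ((q : ℝ) / 2) ≠ 0 := by positivity
    have hrp : Tendsto (fun n : ℕ => (Real.log n / n) ^ ((q : ℝ) / 2)) atTop (nhds 0) := by
      have := hld.rpow_const (Or.inr (by positivity : (0:ℝ) ≤ (q : ℝ) / 2))
      rwa [Real.zero_rpow hq2] at this
    have := (ENNReal.tendsto_ofReal (((tendsto_const_nhds (x := W / Real.exp 1)).mul hrp)))
    simpa using this
  refine tendsto_of_tendsto_of_tendsto_of_le_of_le' tendsto_const_nhds hub ?_ ?_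
  · exact Eventually.of_forall fun n => zero_le
  · filter_upwards [eventually_ge_atTop 2] with n hn
    rw [hsetEq n]
    exact hbound n hn
end

section
/- Fix reals δ > 0 and W > 0. For each integer n ≥ 2, let Z_n be a random variable with the Gaussian distribution of mean √n·δ and variance 1 (the distribution of the standardized test statistic under the alternative hypothesis), and let p_n = 1 − Φ(Z_n) be the associated one-sided p-value. Then P( p_n ≤ (W/e) · √(log n / n) ) → 1 as n → ∞; equivalently, Φ( Z_{t_n} − √n·δ ) → 0, where t_n = (W/e)·√(log n / n) and Z_t denotes the upper t-quantile of the standard normal distribution (1 − Φ(Z_t) = t). -/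
open MeasureTheory Filter Set Real ProbabilityTheory

lemma arlb_pdf_eq :
    (fun t : ℝ => (Real.sqrt (2 * Real.pi))⁻¹ * Real.exp (-(t ^ 2) / 2)) =
      gaussianPDFReal 0 1 := by
  funext t
  simp [gaussianPDFReal]

lemma arlb_pdf_eq' (t : ℝ) :
    gaussianPDFReal 0 1 t = (Real.sqrt (2 * Real.pi))⁻¹ * Real.exp (-(t ^ 2) / 2) :=
  (congrFun arlb_pdf_eq t).symm

lemma arlb_tail_eq (x : ℝ) :
    1 - (∫ t in Set.Iic x, gaussianPDFReal 0 1 t) = ∫ t in Set.Ioi x, gaussianPDFReal 0 1 t := by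
  have hint := integrable_gaussianPDFReal 0 1
  have h1 := integral_gaussianPDFReal_eq_one 0 (one_ne_zero)
  have h2 := intervalIntegral.integral_Iic_add_Ioi (μ := volume) (b := x)
    hint.integrableOn hint.integrableOn
  linarith

lemma arlb_phi_mono {x y : ℝ} (hxy : x ≤ y) :
    (∫ t in Set.Iic x, gaussianPDFReal 0 1 t) ≤ ∫ t in Set.Iic y, gaussianPDFReal 0 1 t := by
  refine setIntegral_mono_set (integrable_gaussianPDFReal 0 1).integrableOn
    (ae_of_all _ fun t => gaussianPDFReal_nonneg 0 1 t) (HasSubset.Subset.eventuallyLE ?_)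
  exact Set.Iic_subset_Iic.mpr hxy

lemma arlb_tail_le {x : ℝ} (hx : 1 ≤ x) :
    (∫ t in Set.Ioi x, gaussianPDFReal 0 1 t) ≤ Real.exp (-(x ^ 2) / 2) := by
  have hx0 : (0 : ℝ) < x := lt_of_lt_of_le one_pos hx
  have hIntExp : IntegrableOn (fun t : ℝ => Real.exp (x ^ 2 / 2) * Real.exp (-x * t))
      (Set.Ioi x) volume := (exp_neg_integrableOn_Ioi x hx0).const_mul _
  have hmono : (∫ t in Set.Ioi x, gaussianPDFReal 0 1 t) ≤
      ∫ t in Set.Ioi x, Real.exp (x ^ 2 / 2) * Real.exp (-x * t) := by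
    refine setIntegral_mono_on (integrable_gaussianPDFReal 0 1).integrableOn hIntExp
      measurableSet_Ioi (fun t ht => ?_)
    rw [arlb_pdf_eq']
    have h1 : (Real.sqrt (2 * Real.pi))⁻¹ ≤ 1 := by
      rw [inv_le_one_iff₀]
      right
      rw [Real.one_le_sqrt]
      nlinarith [Real.pi_gt_three]
    have h2 : Real.exp (-(t ^ 2) / 2) ≤ Real.exp (x ^ 2 / 2) * Real.exp (-x * t) := by
      rw [← Real.exp_add]
      apply Real.exp_le_exp.mpr
      nlinarith [sq_nonneg (t - x)]
    calc (Real.sqrt (2 * Real.pi))⁻¹ * Real.exp (-(t ^ 2) / 2)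
        ≤ 1 * (Real.exp (x ^ 2 / 2) * Real.exp (-x * t)) := by
          apply mul_le_mul h1 h2 (Real.exp_nonneg _) one_pos.le
      _ = Real.exp (x ^ 2 / 2) * Real.exp (-x * t) := one_mul _
  have hcomp : (∫ t in Set.Ioi x, Real.exp (-x * t)) = x⁻¹ * Real.exp (-(x * x)) := by
    have h := integral_comp_mul_left_Ioi (fun u => Real.exp (-u)) x hx0
    simp only [smul_eq_mul] at h
    rw [show (fun t : ℝ => Real.exp (-x * t)) = fun t : ℝ => Real.exp (-(x * t)) by
      funext t; ring_nf]
    rw [h, integral_exp_neg_Ioi]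
  have hval : (∫ t in Set.Ioi x, Real.exp (x ^ 2 / 2) * Real.exp (-x * t))
      = Real.exp (x ^ 2 / 2) * (x⁻¹ * Real.exp (-(x * x))) := by
    rw [MeasureTheory.integral_const_mul, hcomp]
  have hfin : Real.exp (x ^ 2 / 2) * (x⁻¹ * Real.exp (-(x * x))) ≤ Real.exp (-(x ^ 2) / 2) := by
    have hxinv : x⁻¹ ≤ 1 := by
      rw [inv_le_one_iff₀]; right; exact hx
    have hxinv0 : 0 < x⁻¹ := inv_pos.mpr hx0
    have he : Real.exp (x ^ 2 / 2) * Real.exp (-(x * x)) = Real.exp (-(x ^ 2) / 2) := by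
      rw [← Real.exp_add]; ring_nf
    calc Real.exp (x ^ 2 / 2) * (x⁻¹ * Real.exp (-(x * x)))
        = x⁻¹ * (Real.exp (x ^ 2 / 2) * Real.exp (-(x * x))) := by ring
      _ = x⁻¹ * Real.exp (-(x ^ 2) / 2) := by rw [he]
      _ ≤ 1 * Real.exp (-(x ^ 2) / 2) := by
          apply mul_le_mul_of_nonneg_right hxinv (Real.exp_nonneg _)
      _ = Real.exp (-(x ^ 2) / 2) := one_mul _
  calc (∫ t in Set.Ioi x, gaussianPDFReal 0 1 t)
      ≤ ∫ t in Set.Ioi x, Real.exp (x ^ 2 / 2) * Real.exp (-x * t) := hmono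
    _ = Real.exp (x ^ 2 / 2) * (x⁻¹ * Real.exp (-(x * x))) := hval
    _ ≤ Real.exp (-(x ^ 2) / 2) := hfin

set_option maxHeartbeats 1000000 in
/-- Alternative-hypothesis half of large sample consistency of the ARLB (q = 1).
If `Z_n` has the Gaussian distribution with mean `√n δ` and variance `1`
(the standardized statistic under the alternative) and `p_n = 1 - Φ(Z_n)` is the
one-sided p-value, then `P(p_n ≤ (W/e) √(log n / n)) → 1` as `n → ∞`. -/
theorem arlb_alternative_consistency (δ W : ℝ) (hδ : 0 < δ) (hW : 0 < W) :
    Tendsto (fun n : ℕ =>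
      (ProbabilityTheory.gaussianReal (Real.sqrt n * δ) 1)
        {z : ℝ |
          1 - (∫ t in Set.Iic z, (Real.sqrt (2 * Real.pi))⁻¹ * Real.exp (-(t ^ 2) / 2)) ≤
            (W / Real.exp 1) * Real.sqrt (Real.log n / n)})
      atTop (nhds 1) := by
  set c : ℝ := δ ^ 2 / 8 with hc
  have hc0 : 0 < c := by positivity
  -- The limit `√n · exp(-c n) → 0`.
  have hlim : Tendsto (fun n : ℕ => Real.sqrt n * Real.exp (-(c * n))) atTop (nhds 0) := by
    have h1 : Tendsto (fun x : ℝ => x ^ 1 * Real.exp (-x)) atTop (nhds 0) :=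
      Real.tendsto_pow_mul_exp_neg_atTop_nhds_zero 1
    have h2 : Tendsto (fun n : ℕ => (c * n : ℝ)) atTop atTop :=
      (tendsto_natCast_atTop_atTop (R := ℝ)).const_mul_atTop hc0
    have h3 : Tendsto (fun n : ℕ => c⁻¹ * ((c * n) ^ 1 * Real.exp (-(c * n)))) atTop
        (nhds (c⁻¹ * 0)) := (h1.comp h2).const_mul _
    rw [mul_zero] at h3
    refine tendsto_of_tendsto_of_tendsto_of_le_of_le' tendsto_const_nhds h3 ?_ ?_
    · exact Eventually.of_forall fun n => by positivity
    · filter_upwards [eventually_ge_atTop 1] with n hn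
      have hn1 : (1 : ℝ) ≤ (n : ℝ) := by exact_mod_cast hn
      have hs : Real.sqrt n ≤ n := by
        nlinarith [Real.sq_sqrt (by positivity : (0:ℝ) ≤ (n:ℝ)),
          Real.one_le_sqrt.mpr hn1, Real.sqrt_nonneg (n : ℝ)]
      have heq : c⁻¹ * ((c * n) ^ 1 * Real.exp (-(c * n))) = n * Real.exp (-(c * n)) := by
        field_simp
      rw [heq]
      exact mul_le_mul_of_nonneg_right hs (Real.exp_nonneg _)
  have hevW : ∀ᶠ n : ℕ in atTop, Real.sqrt n * Real.exp (-(c * n)) < W / Real.exp 1 :=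
    hlim.eventually (gt_mem_nhds (by positivity))
  have hev1 : ∀ᶠ n : ℕ in atTop, 1 ≤ Real.sqrt n * δ / 2 := by
    obtain ⟨N, hN⟩ := exists_nat_ge ((2 / δ) ^ 2)
    filter_upwards [eventually_ge_atTop N] with n hn
    have h1 : ((2 / δ) ^ 2 : ℝ) ≤ n := hN.trans (Nat.cast_le.mpr hn)
    have h2 : 2 / δ ≤ Real.sqrt n := by
      have := Real.sqrt_le_sqrt h1
      rwa [Real.sqrt_sq (by positivity)] at this
    rw [div_le_iff₀ hδ] at h2
    linarith
  have hevlog : ∀ᶠ n : ℕ in atTop, 1 ≤ Real.log n := by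
    filter_upwards [eventually_ge_atTop 3] with n hn
    have h3 : (3 : ℝ) ≤ (n : ℝ) := by exact_mod_cast hn
    rw [Real.le_log_iff_exp_le (by linarith)]
    exact le_trans (Real.exp_one_lt_d9.le.trans (by norm_num)) h3
  -- eventual inclusion of the ray in the p-value event
  have hincl : ∀ᶠ n : ℕ in atTop,
      Set.Ici (Real.sqrt n * δ / 2) ⊆
        {z : ℝ |
          1 - (∫ t in Set.Iic z, (Real.sqrt (2 * Real.pi))⁻¹ * Real.exp (-(t ^ 2) / 2)) ≤
            (W / Real.exp 1) * Real.sqrt (Real.log n / n)} := by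
    filter_upwards [hevW, hev1, hevlog, eventually_ge_atTop 1] with n hBW hA hlog hn1
    intro z hz
    simp only [Set.mem_setOf_eq]
    rw [arlb_pdf_eq]
    have hzx : Real.sqrt n * δ / 2 ≤ z := hz
    have hn1R : (1:ℝ) ≤ (n:ℝ) := by exact_mod_cast hn1
    have hnpos : (0:ℝ) < n := by linarith
    have hsq : Real.sqrt n ^ 2 = (n:ℝ) := Real.sq_sqrt (le_of_lt hnpos)
    set x : ℝ := Real.sqrt n * δ / 2 with hxdef
    have step1 : 1 - (∫ t in Set.Iic z, gaussianPDFReal 0 1 t) ≤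
        1 - (∫ t in Set.Iic x, gaussianPDFReal 0 1 t) :=
      sub_le_sub_left (arlb_phi_mono hzx) 1
    have step3 : 1 - (∫ t in Set.Iic x, gaussianPDFReal 0 1 t) ≤ Real.exp (-(x ^ 2) / 2) := by
      rw [arlb_tail_eq]; exact arlb_tail_le hA
    have hxx : -(x ^ 2) / 2 = -(c * n) := by
      rw [hxdef, hc]
      field_simp
      nlinarith [hsq]
    have step4 : Real.exp (-(c * n)) ≤ (W / Real.exp 1) * Real.sqrt (Real.log n / n) := by
      have hspos : 0 < Real.sqrt n := Real.sqrt_pos.mpr hnpos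
      have h5 : Real.exp (-(c * n)) ≤ (W / Real.exp 1) / Real.sqrt n := by
        rw [le_div_iff₀ hspos]
        nlinarith [hBW.le]
      have h6 : (W / Real.exp 1) / Real.sqrt n = (W / Real.exp 1) * Real.sqrt ((n:ℝ)⁻¹) := by
        rw [Real.sqrt_inv]; ring
      have h7 : Real.sqrt ((n:ℝ)⁻¹) ≤ Real.sqrt (Real.log n / n) := by
        apply Real.sqrt_le_sqrt
        rw [div_eq_mul_inv]
        nlinarith [inv_pos.mpr hnpos]
      calc Real.exp (-(c * n)) ≤ (W / Real.exp 1) / Real.sqrt n := h5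
        _ = (W / Real.exp 1) * Real.sqrt ((n:ℝ)⁻¹) := h6
        _ ≤ (W / Real.exp 1) * Real.sqrt (Real.log n / n) := by
            apply mul_le_mul_of_nonneg_left h7 (by positivity)
    calc 1 - (∫ t in Set.Iic z, gaussianPDFReal 0 1 t)
        ≤ 1 - (∫ t in Set.Iic x, gaussianPDFReal 0 1 t) := step1
      _ ≤ Real.exp (-(x ^ 2) / 2) := step3
      _ = Real.exp (-(c * n)) := by rw [hxx]
      _ ≤ (W / Real.exp 1) * Real.sqrt (Real.log n / n) := step4
  -- translation identity for the gaussian measure of the ray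
  have hmeaseq : ∀ n : ℕ,
      (gaussianReal (Real.sqrt n * δ) 1) (Set.Ici (Real.sqrt n * δ / 2))
        = (gaussianReal 0 1) (Set.Ici (-(Real.sqrt n * δ / 2))) := by
    intro n
    have hmap := gaussianReal_map_add_const (μ := 0) (v := 1) (Real.sqrt n * δ)
    rw [zero_add] at hmap
    rw [← hmap, Measure.map_apply (measurable_id'.add_const _) measurableSet_Ici]
    congr 1
    ext w
    simp only [Set.mem_preimage, Set.mem_Ici]
    constructor <;> intro h <;> linarith
  -- the lower bound tends to 1
  have hlow : Tendsto
      (fun n : ℕ => (gaussianReal 0 1 : Measure ℝ) (Set.Ici (-(Real.sqrt n * δ / 2))))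
      atTop (nhds 1) := by
    have hmono : Monotone (fun n : ℕ => Set.Ici (-(Real.sqrt n * δ / 2))) := by
      intro a b hab
      apply Set.Ici_subset_Ici.mpr
      have h := Real.sqrt_le_sqrt (show (a:ℝ) ≤ (b:ℝ) from Nat.cast_le.mpr hab)
      nlinarith
    have hU : (⋃ n : ℕ, Set.Ici (-(Real.sqrt (n : ℕ) * δ / 2))) = Set.univ := by
      ext z
      simp only [Set.mem_iUnion, Set.mem_Ici, Set.mem_univ, iff_true]
      obtain ⟨N, hN⟩ := exists_nat_ge ((max 0 (-(2 * z) / δ)) ^ 2)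
      refine ⟨N, ?_⟩
      have hsqrt : max 0 (-(2 * z) / δ) ≤ Real.sqrt N := by
        have := Real.sqrt_le_sqrt hN
        rwa [Real.sqrt_sq (le_max_left _ _)] at this
      have h2 : -(2 * z) / δ ≤ Real.sqrt N := le_trans (le_max_right _ _) hsqrt
      rw [div_le_iff₀ hδ] at h2
      linarith
    have h := tendsto_measure_iUnion_atTop (μ := (gaussianReal 0 1 : Measure ℝ)) hmono
    rw [hU] at h
    simpa [Function.comp_def] using h
  refine tendsto_of_tendsto_of_tendsto_of_le_of_le'
    (g := fun n : ℕ => (gaussianReal (Real.sqrt n * δ) 1) (Set.Ici (Real.sqrt n * δ / 2)))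
    (h := fun _ : ℕ => (1 : ENNReal)) ?_ tendsto_const_nhds ?_ ?_
  · exact hlow.congr fun n => (hmeaseq n).symm
  · filter_upwards [hincl] with n hn
    exact measure_mono hn
  · exact Eventually.of_forall fun n => prob_le_one
end

section
/- Let σ > 0, k > 0, θ₀ ∈ ℝ, x̄ ∈ ℝ, and let n ≥ 1 be an integer. Write z = √n·(x̄ − θ₀)/σ. Let f₀ be the value at x̄ of the density of the Gaussian distribution with mean θ₀ and variance σ²/n, and let m₁ = ∫_ℝ [density at x̄ of the Gaussian with mean θ and variance σ²/n] · [density at θ of the Gaussian with mean θ₀ and variance k·σ²] dθ. Then f₀ / m₁ = √(1 + k·n) · exp( −(z²/2) / (1 + 1/(k·n)) ). -/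
open MeasureTheory

/-- Exact Bayes factor for testing a normal mean with known variance. With an
i.i.d. `N(θ, σ²)` sample of size `n` summarized by `x̄ ~ N(θ, σ²/n)`, a point null
`θ = θ₀`, and conjugate prior `θ ~ N(θ₀, kσ²)` under the alternative, the ratio of
the null density of `x̄` to the marginal density of `x̄` under the alternative is
`√(1+kn) exp(-(z²/2)/(1+1/(kn)))` where `z = √n (x̄-θ₀)/σ`. -/
theorem normal_bayes_factor (σ k θ₀ xbar : ℝ) (hσ : 0 < σ) (hk : 0 < k)
    (n : ℕ) (hn : 1 ≤ n) :
    ((Real.sqrt (2 * Real.pi * (σ ^ 2 / n)))⁻¹ *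
        Real.exp (-(xbar - θ₀) ^ 2 / (2 * (σ ^ 2 / n)))) /
      (∫ θ : ℝ,
        ((Real.sqrt (2 * Real.pi * (σ ^ 2 / n)))⁻¹ *
            Real.exp (-(xbar - θ) ^ 2 / (2 * (σ ^ 2 / n)))) *
        ((Real.sqrt (2 * Real.pi * (k * σ ^ 2)))⁻¹ *
            Real.exp (-(θ - θ₀) ^ 2 / (2 * (k * σ ^ 2))))) =
    Real.sqrt (1 + k * n) *
      Real.exp (-((Real.sqrt n * (xbar - θ₀) / σ) ^ 2 / 2) / (1 + 1 / (k * n))) := by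
  have hn0 : (0:ℝ) < n := by exact_mod_cast hn
  set a : ℝ := σ ^ 2 / n with ha_def
  have ha : 0 < a := by positivity
  set b : ℝ := k * σ ^ 2 with hb_def
  have hb : 0 < b := by positivity
  have hab : 0 < a + b := by linarith
  set v : ℝ := a * b / (a + b) with hv_def
  have hv : 0 < v := by positivity
  set μ : ℝ := (b * xbar + a * θ₀) / (a + b) with hμ_def
  have hπ : 0 < Real.pi := Real.pi_pos
  -- pointwise identity
  have h1 : ∀ θ : ℝ,
      ((Real.sqrt (2 * Real.pi * a))⁻¹ * Real.exp (-(xbar - θ) ^ 2 / (2 * a))) *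
      ((Real.sqrt (2 * Real.pi * b))⁻¹ * Real.exp (-(θ - θ₀) ^ 2 / (2 * b))) =
      ((Real.sqrt (2 * Real.pi * a))⁻¹ * (Real.sqrt (2 * Real.pi * b))⁻¹ *
        Real.exp (-(xbar - θ₀) ^ 2 / (2 * (a + b)))) *
        Real.exp (-(1/(2*v)) * (θ - μ) ^ 2) := by
    intro θ
    have hexp : Real.exp (-(xbar - θ) ^ 2 / (2 * a)) * Real.exp (-(θ - θ₀) ^ 2 / (2 * b)) =
        Real.exp (-(xbar - θ₀) ^ 2 / (2 * (a + b))) * Real.exp (-(1/(2*v)) * (θ - μ) ^ 2) := by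
      rw [← Real.exp_add, ← Real.exp_add]
      congr 1
      rw [hv_def, hμ_def]
      field_simp
      ring
    calc ((Real.sqrt (2 * Real.pi * a))⁻¹ * Real.exp (-(xbar - θ) ^ 2 / (2 * a))) *
        ((Real.sqrt (2 * Real.pi * b))⁻¹ * Real.exp (-(θ - θ₀) ^ 2 / (2 * b)))
        = (Real.sqrt (2 * Real.pi * a))⁻¹ * (Real.sqrt (2 * Real.pi * b))⁻¹ *
          (Real.exp (-(xbar - θ) ^ 2 / (2 * a)) * Real.exp (-(θ - θ₀) ^ 2 / (2 * b))) := by ring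
      _ = _ := by rw [hexp]; ring
  have hI : (∫ θ : ℝ,
      ((Real.sqrt (2 * Real.pi * a))⁻¹ * Real.exp (-(xbar - θ) ^ 2 / (2 * a))) *
      ((Real.sqrt (2 * Real.pi * b))⁻¹ * Real.exp (-(θ - θ₀) ^ 2 / (2 * b)))) =
      (Real.sqrt (2 * Real.pi * a))⁻¹ * (Real.sqrt (2 * Real.pi * b))⁻¹ *
        Real.exp (-(xbar - θ₀) ^ 2 / (2 * (a + b))) * Real.sqrt (2 * Real.pi * v) := by
    simp_rw [h1]
    rw [integral_const_mul]
    rw [integral_sub_right_eq_self (fun θ => Real.exp (-(1/(2*v)) * θ ^ 2)) μ,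
      integral_gaussian]
    rw [show Real.pi / (1/(2*v)) = 2 * Real.pi * v by field_simp]
  rw [hI]
  -- now pure algebra
  have hsa : (0:ℝ) < Real.sqrt (2 * Real.pi * a) := Real.sqrt_pos.2 (by positivity)
  have hsb : (0:ℝ) < Real.sqrt (2 * Real.pi * b) := Real.sqrt_pos.2 (by positivity)
  have hsv : (0:ℝ) < Real.sqrt (2 * Real.pi * v) := Real.sqrt_pos.2 (by positivity)
  have hkn : (0:ℝ) < 1 + k * n := by positivity
  have hsqrtkn : Real.sqrt (1 + k * n) * Real.sqrt (2 * Real.pi * v) =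
      Real.sqrt (2 * Real.pi * b) := by
    rw [← Real.sqrt_mul hkn.le]
    congr 1
    rw [hv_def, ha_def, hb_def]
    field_simp
  have hexp2 : Real.exp (-(xbar - θ₀) ^ 2 / (2 * a)) =
      Real.exp (-((Real.sqrt n * (xbar - θ₀) / σ) ^ 2 / 2) / (1 + 1 / (k * n))) *
      Real.exp (-(xbar - θ₀) ^ 2 / (2 * (a + b))) := by
    rw [← Real.exp_add]
    congr 1
    rw [ha_def, hb_def, div_pow, mul_pow, Real.sq_sqrt hn0.le]
    have hkn' : (0:ℝ) < k * n := by positivity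
    field_simp
    ring
  rw [hexp2]
  have key : ∀ sa sb sv e1 e2 sk : ℝ, sa ≠ 0 → sb ≠ 0 → sv ≠ 0 → e2 ≠ 0 →
      sk * sv = sb → sa⁻¹ * (e1 * e2) / (sa⁻¹ * sb⁻¹ * e2 * sv) = sk * e1 := by
    intro sa sb sv e1 e2 sk hsa' hsb' hsv' he2 hsk
    rw [← hsk]
    field_simp
  exact key _ _ _ _ _ _ hsa.ne' hsb.ne' hsv.ne' (Real.exp_ne_zero _) hsqrtkn
end

section
/- For all real m > 0 and c > 0, ∫_0^∞ v^m · e^{−v} / (v + c)² dv = Γ(m) · ( (m + c) · e^{c} · E_m(c) − 1 ), where Γ is the real Gamma function. -/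
section AuxIntegralPowExp
open MeasureTheory Set Real Filter Topology Asymptotics

lemma aux_int1 {p b : ℝ} (hp : 0 < p) (hb : 0 < b) :
    IntegrableOn (fun x : ℝ => x ^ (p - 1) * Real.exp (-(b * x))) (Ioi 0) := by
  rw [← Ioc_union_Ioi_eq_Ioi (zero_le_one : (0:ℝ) ≤ 1)]
  refine IntegrableOn.union ?_ ?_
  · have h0 : IntegrableOn (fun x : ℝ => x ^ (p - 1)) (Ioc 0 1) := by
      have := intervalIntegral.intervalIntegrable_rpow' (a := 0) (b := 1)
        (by linarith : (-1:ℝ) < p - 1)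
      rwa [intervalIntegrable_iff_integrableOn_Ioc_of_le zero_le_one] at this
    refine h0.mono' ?_ ?_
    · refine ContinuousOn.aestronglyMeasurable ?_ measurableSet_Ioc
      exact (continuousOn_id.rpow_const
        (fun x hx => Or.inl (by simpa using hx.1.ne'))).mul
        (Continuous.continuousOn (by continuity))
    · filter_upwards [self_mem_ae_restrict measurableSet_Ioc] with x hx
      have hx0 : 0 < x := hx.1
      rw [Real.norm_eq_abs, abs_mul, abs_of_nonneg (rpow_nonneg hx0.le _),
        abs_of_nonneg (exp_pos _).le]
      nth_rewrite 2 [← mul_one (x ^ (p-1))]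
      exact mul_le_mul_of_nonneg_left
        (exp_le_one_iff.mpr (by nlinarith)) (rpow_nonneg hx0.le _)
  · refine integrable_of_isBigO_exp_neg (half_pos hb) ?_ ?_
    · exact (continuousOn_id.rpow_const
        (fun x hx => Or.inl (by simpa using (zero_lt_one.trans_le hx).ne'))).mul
        (Continuous.continuousOn (by continuity))
    · have h := tendsto_rpow_mul_exp_neg_mul_atTop_nhds_zero (p - 1) (b/2) (half_pos hb)
      rw [Asymptotics.isBigO_iff]
      refine ⟨1, ?_⟩
      filter_upwards [(by simpa using h.norm : Tendsto (fun x => ‖x ^ (p - 1) * Real.exp (-(b/2) * x)‖) atTop (𝓝 0)).eventually_lt_const zero_lt_one] with x hx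
      have : x ^ (p - 1) * Real.exp (-(b * x)) =
          (x ^ (p - 1) * Real.exp (-(b/2) * x)) * Real.exp (-(b/2) * x) := by
        rw [mul_assoc, ← Real.exp_add]; ring_nf
      rw [this, norm_mul]
      exact mul_le_mul_of_nonneg_right hx.le (norm_nonneg _) |>.trans (by simp)

lemma contOn_aux {p c : ℝ} (hc : 0 < c) (k : ℕ) :
    ContinuousOn (fun v : ℝ => v ^ p * Real.exp (-v) / (v + c) ^ k) (Ioi 0) := by
  refine ContinuousOn.div ?_ (Continuous.continuousOn (by continuity)) ?_
  · exact (continuousOn_id.rpow_const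
      (fun x hx => Or.inl (by simpa using (mem_Ioi.mp hx).ne'))).mul
      (Continuous.continuousOn (by continuity))
  · intro x hx
    have : 0 < x + c := by have := mem_Ioi.mp hx; linarith
    positivity

lemma aux_int_div {p c : ℝ} (hp : 0 < p) (hc : 0 < c) :
    IntegrableOn (fun v : ℝ => v ^ (p - 1) * Real.exp (-v) / (v + c)) (Ioi 0) := by
  refine ((aux_int1 hp one_pos).mul_const c⁻¹).mono' ?_ ?_
  · exact ((contOn_aux (p := p - 1) hc 1).congr
      (fun v hv => by simp)).aestronglyMeasurable measurableSet_Ioi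
  · filter_upwards [self_mem_ae_restrict measurableSet_Ioi] with v hv
    have hv0 : 0 < v := mem_Ioi.mp hv
    have hvc : c ≤ v + c := by linarith
    have hvc0 : 0 < v + c := by linarith
    simp only [one_mul, Real.norm_eq_abs]
    rw [abs_of_nonneg (by positivity), div_eq_mul_inv]
    gcongr

lemma aux_int_div_sq {m c : ℝ} (hm : 0 < m) (hc : 0 < c) :
    IntegrableOn (fun v : ℝ => v ^ m * Real.exp (-v) / (v + c) ^ 2) (Ioi 0) := by
  have h1 : IntegrableOn (fun x : ℝ => x ^ m * Real.exp (-(1 * x))) (Ioi 0) := by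
    simpa using aux_int1 (p := m + 1) (by linarith) one_pos
  refine (h1.mul_const (c ^ 2)⁻¹).mono' ?_ ?_
  · exact (contOn_aux (p := m) hc 2).aestronglyMeasurable measurableSet_Ioi
  · filter_upwards [self_mem_ae_restrict measurableSet_Ioi] with v hv
    have hv0 : 0 < v := mem_Ioi.mp hv
    have hvc : c ≤ v + c := by linarith
    have hvc0 : 0 < v + c := by linarith
    simp only [one_mul, Real.norm_eq_abs]
    rw [abs_of_nonneg (by positivity), div_eq_mul_inv]
    gcongr

lemma aux_exp_int {a : ℝ} (ha : 0 < a) :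
    ∫ s in Ioi (0:ℝ), Real.exp (-(a * s)) = a⁻¹ := by
  have hderiv : ∀ s ∈ Ici (0:ℝ), HasDerivAt (fun s : ℝ => -Real.exp (-(a * s)) / a)
      (Real.exp (-(a * s))) s := by
    intro s _
    have h1 : HasDerivAt (fun s : ℝ => -(a * s)) (-a) s := by
      simpa using ((hasDerivAt_id s).const_mul a).fun_neg
    have := (h1.exp.neg).div_const a
    simpa [mul_comm, ha.ne'] using this
  have hint : IntegrableOn (fun s : ℝ => Real.exp (-(a * s))) (Ioi 0) := by
    simpa [neg_mul] using exp_neg_integrableOn_Ioi 0 ha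
  have htend : Tendsto (fun s : ℝ => -Real.exp (-(a * s)) / a) atTop (𝓝 0) := by
    have : Tendsto (fun s : ℝ => -(a * s)) atTop atBot := by
      simpa using tendsto_neg_atBot_iff.mpr (tendsto_id.const_mul_atTop ha)
    have := ((tendsto_exp_atBot.comp this).neg).div_const a
    simpa using this
  have := integral_Ioi_of_hasDerivAt_of_tendsto' hderiv hint htend
  simp only [mul_zero, neg_zero, Real.exp_zero] at this
  rw [this]; ring

lemma aux_Em_int {p c : ℝ} (hp : 0 ≤ p) (hc : 0 < c) :
    IntegrableOn (fun t : ℝ => Real.exp (-(c * t)) * t ^ (-p)) (Ioi 1) := by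
  have h : IntegrableOn (fun t : ℝ => Real.exp (-(c * t))) (Ioi 1) := by
    simpa [neg_mul] using exp_neg_integrableOn_Ioi 1 hc
  refine h.mono' ?_ ?_
  · refine ContinuousOn.aestronglyMeasurable ?_ measurableSet_Ioi
    exact (Continuous.continuousOn (by continuity)).mul
      (continuousOn_id.rpow_const
        (fun x hx => Or.inl (by simpa using (zero_lt_one.trans (mem_Ioi.mp hx)).ne')))
  · filter_upwards [self_mem_ae_restrict measurableSet_Ioi] with t ht
    have ht1 : (1:ℝ) < t := mem_Ioi.mp ht
    have ht0 : (0:ℝ) < t := zero_lt_one.trans ht1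
    rw [Real.norm_eq_abs, abs_of_nonneg (by positivity)]
    nth_rewrite 2 [← mul_one (Real.exp (-(c*t)))]
    refine mul_le_mul_of_nonneg_left ?_ (exp_pos _).le
    exact Real.rpow_le_one_of_one_le_of_nonpos ht1.le (by linarith)

lemma aux_Em_rec {p c : ℝ} (hp : 0 < p) (hc : 0 < c) :
    c * (∫ t in Ioi (1:ℝ), Real.exp (-(c * t)) * t ^ (-p))
      + p * (∫ t in Ioi (1:ℝ), Real.exp (-(c * t)) * t ^ (-(p+1))) = Real.exp (-c) := by
  have key : ∫ t in Ioi (1:ℝ),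
      (c * (Real.exp (-(c * t)) * t ^ (-p)) + p * (Real.exp (-(c * t)) * t ^ (-(p+1))))
      = Real.exp (-c) := by
    have hderiv : ∀ t ∈ Ici (1:ℝ), HasDerivAt (fun t : ℝ => -(Real.exp (-(c * t)) * t ^ (-p)))
        (c * (Real.exp (-(c * t)) * t ^ (-p)) + p * (Real.exp (-(c * t)) * t ^ (-(p+1)))) t := by
      intro t ht
      have ht0 : (0:ℝ) < t := zero_lt_one.trans_le (mem_Ici.mp ht)
      have h1 : HasDerivAt (fun t : ℝ => -(c * t)) (-c) t := by
        simpa using ((hasDerivAt_id t).const_mul c).fun_neg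
      have h2 : HasDerivAt (fun t : ℝ => t ^ (-p)) (-p * t ^ (-p - 1)) t :=
        Real.hasDerivAt_rpow_const (Or.inl ht0.ne')
      have := (h1.exp.fun_mul h2).fun_neg
      refine this.congr_deriv ?_
      have he : -(p+1) = -p - 1 := by ring
      rw [he]; ring
    have hint : IntegrableOn (fun t : ℝ =>
        c * (Real.exp (-(c * t)) * t ^ (-p)) + p * (Real.exp (-(c * t)) * t ^ (-(p+1)))) (Ioi 1) :=
      ((aux_Em_int hp.le hc).const_mul c).add ((aux_Em_int (by linarith) hc).const_mul p)
    have htend : Tendsto (fun t : ℝ => -(Real.exp (-(c * t)) * t ^ (-p))) atTop (𝓝 0) := by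
      have hexp : Tendsto (fun t : ℝ => Real.exp (-(c * t))) atTop (𝓝 0) := by
        refine tendsto_exp_atBot.comp ?_
        simpa using tendsto_neg_atBot_iff.mpr (tendsto_id.const_mul_atTop hc)
      have hr : Tendsto (fun t : ℝ => t ^ (-p)) atTop (𝓝 0) := tendsto_rpow_neg_atTop hp
      simpa using (hexp.mul hr).neg
    have := integral_Ioi_of_hasDerivAt_of_tendsto' hderiv hint htend
    rw [this]
    simp [Real.rpow_natCast]
  rw [← key, integral_add ((aux_Em_int hp.le hc).const_mul c)
      ((aux_Em_int (by linarith) hc).const_mul p), integral_const_mul, integral_const_mul]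

lemma aux_shift (g : ℝ → ℝ) : ∫ t in Ioi (1:ℝ), g t = ∫ s in Ioi (0:ℝ), g (s + 1) := by
  have h := (measurePreserving_add_right volume (1:ℝ)).setIntegral_preimage_emb
    (measurableEmbedding_addRight (1:ℝ)) g (Ioi 1)
  have hpre : (· + (1:ℝ)) ⁻¹' Ioi 1 = Ioi 0 := by
    ext x; simp
  rw [hpre] at h
  exact h.symm

lemma aux_slice {p c : ℝ} (hp : 0 < p) (hc : 0 < c) {s : ℝ} (hs : 0 ≤ s) :
    ∫ v in Ioi (0:ℝ), Real.exp (-(c * s)) * (v ^ (p - 1) * Real.exp (-((1 + s) * v)))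
      = Real.exp (-(c * s)) * ((1 + s) ^ (-p) * Real.Gamma p) := by
  rw [integral_const_mul, Real.integral_rpow_mul_exp_neg_mul_Ioi hp (by linarith)]
  congr 2
  rw [one_div, ← Real.rpow_neg_one ((1:ℝ)+s), ← Real.rpow_mul (by linarith : (0:ℝ) ≤ 1 + s)]
  norm_num

set_option maxHeartbeats 1000000 in
lemma aux_keyG {p c : ℝ} (hp : 0 < p) (hc : 0 < c) :
    ∫ v in Ioi (0:ℝ), v ^ (p - 1) * Real.exp (-v) / (v + c)
      = Real.Gamma p * ∫ s in Ioi (0:ℝ), Real.exp (-(c * s)) * (1 + s) ^ (-p) := by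
  set μ := volume.restrict (Ioi (0:ℝ)) with hμ
  set F : ℝ → ℝ → ℝ :=
    fun s v => Real.exp (-(c * s)) * (v ^ (p - 1) * Real.exp (-((1 + s) * v))) with hF
  -- joint measurability
  have hmeas : AEStronglyMeasurable (Function.uncurry F) (μ.prod μ) := by
    rw [hμ, Measure.prod_restrict]
    refine ContinuousOn.aestronglyMeasurable ?_ (measurableSet_Ioi.prod measurableSet_Ioi)
    have hcont : ContinuousOn (fun z : ℝ × ℝ => z.2 ^ (p - 1)) (Ioi 0 ×ˢ Ioi 0) := by
      refine ContinuousOn.rpow_const (continuous_snd.continuousOn) ?_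
      rintro ⟨s, v⟩ ⟨_, hv⟩
      exact Or.inl (ne_of_gt (mem_Ioi.mp hv))
    have h2 : ContinuousOn (fun z : ℝ × ℝ => Real.exp (-(c * z.1))) (Ioi 0 ×ˢ Ioi 0) :=
      Continuous.continuousOn (by continuity)
    have h3 : ContinuousOn (fun z : ℝ × ℝ => Real.exp (-((1 + z.1) * z.2))) (Ioi 0 ×ˢ Ioi 0) :=
      Continuous.continuousOn (by continuity)
    exact h2.mul (hcont.mul h3)
  -- integrability on product
  have hint : Integrable (Function.uncurry F) (μ.prod μ) := by
    refine (integrable_prod_iff hmeas).mpr ⟨?_, ?_⟩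
    · simp only [Function.uncurry_apply_pair]
      filter_upwards [self_mem_ae_restrict measurableSet_Ioi] with s hs
      have h1s : (0:ℝ) < 1 + s := by have := mem_Ioi.mp hs; linarith
      exact ((aux_int1 hp h1s).const_mul _)
    · simp only [Function.uncurry_apply_pair]
      have hbound : ∀ s ∈ Ioi (0:ℝ),
          (∫ v, ‖F s v‖ ∂μ) = Real.exp (-(c * s)) * ((1 + s) ^ (-p) * Real.Gamma p) := by
        intro s hs
        have h0s : (0:ℝ) < s := mem_Ioi.mp hs
        have : (∫ v, ‖F s v‖ ∂μ) = ∫ v, F s v ∂μ := by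
          rw [hμ]
          refine setIntegral_congr_fun measurableSet_Ioi (fun v hv => ?_)
          have hv0 : (0:ℝ) < v := mem_Ioi.mp hv
          rw [hF]
          exact norm_of_nonneg (by positivity)
        rw [this, hμ]
        exact aux_slice hp hc h0s.le
      refine Integrable.mono' (g := fun s => Real.Gamma p * Real.exp (-(c * s))) ?_ ?_ ?_
      · have : IntegrableOn (fun s : ℝ => Real.exp (-(c * s))) (Ioi 0) := by
          simpa [neg_mul] using exp_neg_integrableOn_Ioi 0 hc
        exact this.const_mul _
      · exact hmeas.norm.integral_prod_right'
      · filter_upwards [self_mem_ae_restrict measurableSet_Ioi] with s hs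
        have h0s : (0:ℝ) < s := mem_Ioi.mp hs
        rw [Real.norm_eq_abs, hbound s hs, abs_of_nonneg (by positivity)]
        rw [mul_comm (Real.Gamma p)]
        refine mul_le_mul_of_nonneg_left ?_ (exp_pos _).le
        nth_rewrite 2 [← one_mul (Real.Gamma p)]
        refine mul_le_mul_of_nonneg_right ?_ (Real.Gamma_nonneg_of_nonneg hp.le)
        exact Real.rpow_le_one_of_one_le_of_nonpos (by linarith) (by linarith)
  -- swap
  have hswap := integral_integral_swap hint
  -- inner integral over s for fixed v
  have hinner : ∀ v ∈ Ioi (0:ℝ),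
      (∫ s, F s v ∂μ) = v ^ (p - 1) * Real.exp (-v) / (v + c) := by
    intro v hv
    have hv0 : (0:ℝ) < v := mem_Ioi.mp hv
    have heq : ∀ s : ℝ, F s v
        = (v ^ (p - 1) * Real.exp (-v)) * Real.exp (-((c + v) * s)) := by
      intro s
      rw [hF]
      dsimp only
      rw [show -((1+s)*v) = -v + -(v*s) by ring, Real.exp_add,
        show -((c+v)*s) = -(c*s) + -(v*s) by ring, Real.exp_add]
      ring
    calc (∫ s, F s v ∂μ)
        = ∫ s in Ioi (0:ℝ), (v ^ (p - 1) * Real.exp (-v)) * Real.exp (-((c + v) * s)) := by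
          rw [hμ]; exact setIntegral_congr_fun measurableSet_Ioi (fun s _ => heq s)
      _ = (v ^ (p - 1) * Real.exp (-v)) * (c + v)⁻¹ := by
          rw [integral_const_mul, aux_exp_int (by linarith)]
      _ = v ^ (p - 1) * Real.exp (-v) / (v + c) := by
          rw [div_eq_mul_inv, add_comm c v]
  -- slice integral over v for fixed s
  have hslice : ∀ s ∈ Ioi (0:ℝ),
      (∫ v, F s v ∂μ) = Real.exp (-(c * s)) * ((1 + s) ^ (-p) * Real.Gamma p) := by
    intro s hs
    exact aux_slice hp hc (le_of_lt (mem_Ioi.mp hs))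
  calc ∫ v in Ioi (0:ℝ), v ^ (p - 1) * Real.exp (-v) / (v + c)
      = ∫ v, (∫ s, F s v ∂μ) ∂μ := by
        rw [hμ]
        exact (setIntegral_congr_fun measurableSet_Ioi (fun v hv => hinner v hv)).symm
    _ = ∫ s, (∫ v, F s v ∂μ) ∂μ := hswap.symm
    _ = ∫ s in Ioi (0:ℝ), Real.exp (-(c * s)) * ((1 + s) ^ (-p) * Real.Gamma p) := by
        rw [hμ]
        exact setIntegral_congr_fun measurableSet_Ioi (fun s hs => hslice s hs)
    _ = Real.Gamma p * ∫ s in Ioi (0:ℝ), Real.exp (-(c * s)) * (1 + s) ^ (-p) := by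
        rw [← integral_const_mul]
        congr 1; funext s; ring

lemma aux_A {p c : ℝ} (hp : 0 < p) (hc : 0 < c) :
    ∫ v in Ioi (0:ℝ), v ^ (p - 1) * Real.exp (-v) / (v + c)
      = Real.Gamma p * (Real.exp c * ∫ t in Ioi (1:ℝ), Real.exp (-(c * t)) * t ^ (-p)) := by
  rw [aux_keyG hp hc]
  congr 1
  have h := (aux_shift (fun t => Real.exp (-(c * t)) * t ^ (-p))).trans
    (setIntegral_congr_fun measurableSet_Ioi (fun s (hs : s ∈ Ioi (0:ℝ)) => by
      show Real.exp (-(c * (s+1))) * (s+1) ^ (-p)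
          = Real.exp (-c) * (Real.exp (-(c * s)) * (1 + s) ^ (-p))
      rw [show -(c*(s+1)) = -(c*s) + -c by ring, Real.exp_add, add_comm s 1]
      ring))
  rw [integral_const_mul] at h
  rw [h, ← mul_assoc, ← Real.exp_add]
  simp

lemma aux_IBP {m c : ℝ} (hm : 0 < m) (hc : 0 < c) :
    ∫ v in Ioi (0:ℝ), (v ^ m * Real.exp (-v) / (v + c) ^ 2
      - (m * (v ^ (m - 1) * Real.exp (-v) / (v + c)) - v ^ m * Real.exp (-v) / (v + c))) = 0 := by
  have hcont : ContinuousWithinAt (fun v : ℝ => -(v ^ m * Real.exp (-v) / (v + c)))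
      (Ici 0) 0 := by
    refine ContinuousAt.continuousWithinAt ?_
    have h1 : ContinuousAt (fun v : ℝ => v ^ m) 0 :=
      Real.continuousAt_rpow_const 0 m (Or.inr hm.le)
    have h2 : ContinuousAt (fun v : ℝ => Real.exp (-v)) 0 := by fun_prop
    have h3 : ContinuousAt (fun v : ℝ => v + c) 0 := by fun_prop
    exact ((h1.mul h2).div h3 (by simpa using hc.ne')).neg
  have hderiv : ∀ v ∈ Ioi (0:ℝ),
      HasDerivAt (fun v : ℝ => -(v ^ m * Real.exp (-v) / (v + c)))
        (v ^ m * Real.exp (-v) / (v + c) ^ 2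
          - (m * (v ^ (m - 1) * Real.exp (-v) / (v + c)) - v ^ m * Real.exp (-v) / (v + c))) v := by
    intro v hv
    have hv0 : (0:ℝ) < v := mem_Ioi.mp hv
    have hvc : (0:ℝ) < v + c := by linarith
    have h1 : HasDerivAt (fun v : ℝ => v ^ m) (m * v ^ (m - 1)) v :=
      Real.hasDerivAt_rpow_const (Or.inl hv0.ne')
    have h2 : HasDerivAt (fun v : ℝ => Real.exp (-v)) (Real.exp (-v) * -1) v :=
      ((hasDerivAt_id v).neg).exp
    have hB : HasDerivAt (fun v : ℝ => v + c) 1 v := (hasDerivAt_id v).add_const c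
    have := ((h1.fun_mul h2).fun_div hB hvc.ne').fun_neg
    refine this.congr_deriv ?_
    field_simp
    ring
  have hint : IntegrableOn (fun v : ℝ => v ^ m * Real.exp (-v) / (v + c) ^ 2
      - (m * (v ^ (m - 1) * Real.exp (-v) / (v + c)) - v ^ m * Real.exp (-v) / (v + c)))
      (Ioi 0) := by
    have hi3 := aux_int_div (p := m + 1) (by linarith) hc
    simp only [add_sub_cancel_right] at hi3
    exact (aux_int_div_sq hm hc).sub (((aux_int_div hm hc).const_mul m).sub hi3)
  have htend : Tendsto (fun v : ℝ => -(v ^ m * Real.exp (-v) / (v + c))) atTop (𝓝 0) := by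
    have h1 : Tendsto (fun v : ℝ => v ^ m * Real.exp (-v)) atTop (𝓝 0) := by
      simpa using tendsto_rpow_mul_exp_neg_mul_atTop_nhds_zero m 1 one_pos
    have h2 : Tendsto (fun v : ℝ => (v + c)⁻¹) atTop (𝓝 0) :=
      tendsto_inv_atTop_zero.comp (tendsto_atTop_add_const_right _ c tendsto_id)
    have := (h1.mul h2).neg
    simpa [div_eq_mul_inv] using this
  have h := integral_Ioi_of_hasDerivAt_of_tendsto hcont hderiv hint htend
  rw [h, Real.zero_rpow hm.ne']
  simp

end AuxIntegralPowExp

open MeasureTheory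

section Main
open Set Real Filter Topology

/-- For `m > 0` and `c > 0`,
`∫₀^∞ vᵐ e^{-v}/(v+c)² dv = Γ(m) ((m+c) e^c E_m(c) - 1)`,
where `E_m(c) = ∫₁^∞ e^{-ct} t^{-m} dt` is the generalized exponential integral. -/
theorem integral_pow_exp_div_sq (m c : ℝ) (hm : 0 < m) (hc : 0 < c) :
    ∫ v in Set.Ioi (0 : ℝ), v ^ m * Real.exp (-v) / (v + c) ^ 2 =
      Real.Gamma m *
        ((m + c) * Real.exp c *
            (∫ t in Set.Ioi (1 : ℝ), Real.exp (-(c * t)) * t ^ (-m)) - 1) := by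
  have hA1 := aux_A hm hc
  have hA2 := aux_A (p := m + 1) (by linarith) hc
  simp only [add_sub_cancel_right] at hA2
  have hrec := aux_Em_rec hm hc
  have hIBP := aux_IBP hm hc
  have hi1 := aux_int_div_sq hm hc
  have hi2 := (aux_int_div hm hc).const_mul m
  have hi3 := aux_int_div (p := m + 1) (by linarith) hc
  simp only [add_sub_cancel_right] at hi3
  have hi23 : Integrable (fun v : ℝ => m * (v ^ (m - 1) * Real.exp (-v) / (v + c))
      - v ^ m * Real.exp (-v) / (v + c)) (volume.restrict (Ioi 0)) := hi2.sub hi3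
  rw [integral_sub hi1 hi23, integral_sub hi2 hi3, integral_const_mul,
    sub_eq_zero] at hIBP
  rw [hIBP, hA1, hA2, Real.Gamma_add_one hm.ne']
  have hec : Real.exp c * Real.exp (-c) = 1 := by
    rw [← Real.exp_add]; simp
  set E1 := ∫ t in Set.Ioi (1:ℝ), Real.exp (-(c * t)) * t ^ (-m)
  set E2 := ∫ t in Set.Ioi (1:ℝ), Real.exp (-(c * t)) * t ^ (-(m+1))
  linear_combination (-(Real.Gamma m * Real.exp c)) * hrec - Real.Gamma m * hec

end Main
end

section
/- Let n ≥ 1 be an integer and let x̄ > 0 and b > 0 be reals. Then ∫_0^∞ λ^n · e^{−n·λ·x̄} · b/(λ + b)² dλ = ( b · Γ(n) / (n·x̄)^{n−1} ) · ( n·(x̄·b + 1) · e^{n·x̄·b} · E_n(n·x̄·b) − 1 ), where Γ is the real Gamma function. -/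
section Helpers

open MeasureTheory Set Real Filter

namespace ExpIntrinsic

/-- `J c b m = ∫₀^∞ e^{-cl} (l+b)^{-m} dl`. -/
noncomputable def J (c b : ℝ) (m : ℕ) : ℝ :=
  ∫ l in Ioi (0 : ℝ), Real.exp (-(c * l)) / (l + b) ^ m

lemma contOn {c b : ℝ} (hb : 0 < b) (n m : ℕ) :
    ContinuousOn (fun l : ℝ => l ^ n * Real.exp (-(c * l)) / (l + b) ^ m) (Ici 0) := by
  apply ContinuousOn.div
  · fun_prop
  · fun_prop
  · intro x hx
    have hx0 : (0:ℝ) ≤ x := hx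
    have : 0 < x + b := by positivity
    positivity

lemma intOn {c b : ℝ} (hc : 0 < c) (hb : 0 < b) (n m : ℕ) :
    IntegrableOn (fun l : ℝ => l ^ n * Real.exp (-(c * l)) / (l + b) ^ m) (Ioi 0) := by
  have key : IntegrableOn (fun l : ℝ => l ^ n * Real.exp (-(c * l))) (Ioi 0) := by
    have h := integrableOn_rpow_mul_exp_neg_mul_rpow (p := 1) (s := n) (b := c)
      (lt_of_lt_of_le neg_one_lt_zero (Nat.cast_nonneg n)) zero_lt_one hc
    refine h.congr_fun (fun x hx => ?_) measurableSet_Ioi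
    have hx0 : (0:ℝ) < x := hx
    dsimp only
    rw [Real.rpow_one, Real.rpow_natCast, neg_mul]
  refine Integrable.mono' (key.mul_const ((b ^ m)⁻¹)) ?_ ?_
  · exact ((contOn hb n m).mono Ioi_subset_Ici_self).aestronglyMeasurable measurableSet_Ioi
  · filter_upwards [ae_restrict_mem measurableSet_Ioi] with x hx
    have hx0 : (0:ℝ) < x := hx
    have hxb : (0:ℝ) < x + b := by positivity
    have hbm : (0:ℝ) < b ^ m := by positivity
    have hxbm : b ^ m ≤ (x + b) ^ m := pow_le_pow_left₀ hb.le (by linarith) m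
    rw [Real.norm_eq_abs, abs_div, abs_of_nonneg (by positivity), abs_of_nonneg (by positivity)]
    rw [div_le_iff₀ (by positivity)]
    calc x ^ n * Real.exp (-(c * x)) = x ^ n * Real.exp (-(c * x)) * (b ^ m)⁻¹ * b ^ m := by
          field_simp
      _ ≤ x ^ n * Real.exp (-(c * x)) * (b ^ m)⁻¹ * (x + b) ^ m := by
          apply mul_le_mul_of_nonneg_left hxbm
          positivity

lemma intJ {c b : ℝ} (hc : 0 < c) (hb : 0 < b) (m : ℕ) :
    IntegrableOn (fun l : ℝ => Real.exp (-(c * l)) / (l + b) ^ m) (Ioi 0) := by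
  have := intOn hc hb 0 m
  simpa using this

lemma polyExp {c : ℝ} (hc : 0 < c) (n : ℕ) :
    ∫ l in Ioi (0:ℝ), l ^ n * Real.exp (-(c * l)) = (n.factorial : ℝ) / c ^ (n + 1) := by
  have h := integral_rpow_mul_exp_neg_mul_Ioi (a := (n:ℝ) + 1) (r := c) (by positivity) hc
  rw [show ((n:ℝ) + 1 - 1) = (n:ℝ) by ring] at h
  rw [setIntegral_congr_fun measurableSet_Ioi
    (fun x (hx : (0:ℝ) < x) => by rw [Real.rpow_natCast])] at h
  rw [h, show ((n:ℝ) + 1) = ((n + 1 : ℕ) : ℝ) by push_cast; ring, Real.rpow_natCast,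
    show ((n + 1 : ℕ) : ℝ) = (n:ℝ) + 1 by push_cast; ring, Real.Gamma_nat_eq_factorial]
  field_simp
  rw [← mul_pow, one_div_mul_cancel hc.ne', one_pow]


lemma Jrec {c b : ℝ} (hc : 0 < c) (hb : 0 < b) (m : ℕ) (hm : 0 < m) :
    J c b (m + 1) = (b ^ m)⁻¹ / m - c / m * J c b m := by
  obtain ⟨k, rfl⟩ : ∃ k, m = k + 1 := ⟨m - 1, (Nat.succ_pred_eq_of_pos hm).symm⟩
  set m := k + 1 with hmdef
  have hm0 : ((m : ℝ)) ≠ 0 := by positivity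
  -- the antiderivative
  set f : ℝ → ℝ := fun l => -((m:ℝ))⁻¹ * (Real.exp (-(c * l)) * ((l + b) ^ m)⁻¹) with hf
  set f' : ℝ → ℝ := fun l =>
    c / m * (Real.exp (-(c * l)) / (l + b) ^ m) + Real.exp (-(c * l)) / (l + b) ^ (m + 1) with hf'
  have hderiv : ∀ x ∈ Ici (0:ℝ), HasDerivAt f (f' x) x := by
    intro x hx
    have hx0 : (0:ℝ) ≤ x := hx
    have hxb : (0:ℝ) < x + b := by positivity
    have h1 : HasDerivAt (fun l : ℝ => Real.exp (-(c * l))) (-c * Real.exp (-(c * x))) x := by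
      have hinner : HasDerivAt (fun l : ℝ => -(c * l)) (-c) x := by
        exact ((hasDerivAt_id x).const_mul c).neg.congr_deriv (by ring)
      exact ((Real.hasDerivAt_exp (-(c * x))).comp x hinner).congr_deriv
        (by ring : Real.exp (-(c * x)) * -c = -c * Real.exp (-(c * x)))
    have h2 : HasDerivAt (fun l : ℝ => ((l + b) ^ m)⁻¹)
        (-(((m:ℝ)) * (x + b) ^ k) / ((x + b) ^ m) ^ 2) x := by
      have hpow : HasDerivAt (fun l : ℝ => (l + b) ^ m) ((m:ℝ) * (x + b) ^ k) x := by
        have := ((hasDerivAt_id x).add_const b).pow m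
        exact this.congr_deriv (by simp [hmdef])
      exact hpow.inv (by positivity)
    have h3 := (h1.mul h2).const_mul (-((m:ℝ))⁻¹)
    have heq : -((m:ℝ))⁻¹ * (-c * Real.exp (-(c * x)) * ((x + b) ^ m)⁻¹ +
        Real.exp (-(c * x)) * (-(((m:ℝ)) * (x + b) ^ k) / ((x + b) ^ m) ^ 2)) = f' x := by
      rw [hf']
      have hbm : ((x + b) ^ m) ≠ 0 := by positivity
      field_simp
      rw [hmdef]
      push_cast
      ring
    exact heq ▸ h3
  have f'int : IntegrableOn f' (Ioi 0) := by
    exact (((intJ hc hb m).const_mul (c / m))).add (intJ hc hb (m + 1))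
  have hftop : Tendsto f atTop (nhds 0) := by
    have hg : Tendsto (fun l : ℝ => Real.exp (-(c * l)) * ((l + b) ^ m)⁻¹) atTop (nhds 0) := by
      apply squeeze_zero' (g := fun l => Real.exp (-(c * l)) * (b ^ m)⁻¹)
      · filter_upwards [eventually_ge_atTop (0:ℝ)] with x hx
        positivity
      · filter_upwards [eventually_ge_atTop (0:ℝ)] with x hx
        have hxb : (0:ℝ) < x + b := by positivity
        have : b ^ m ≤ (x + b) ^ m := pow_le_pow_left₀ hb.le (by linarith) m
        apply mul_le_mul_of_nonneg_left _ (Real.exp_nonneg _)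
        exact inv_anti₀ (by positivity) this
      · have h1 : Tendsto (fun l : ℝ => Real.exp (-(c * l))) atTop (nhds 0) := by
          have : Tendsto (fun l : ℝ => c * l) atTop atTop :=
            Tendsto.const_mul_atTop hc tendsto_id
          simpa [Function.comp_def] using (Real.tendsto_exp_neg_atTop_nhds_zero.comp this)
        simpa using h1.mul_const ((b ^ m)⁻¹)
    have := hg.const_mul (-((m:ℝ))⁻¹)
    simpa [hf] using this
  have H := integral_Ioi_of_hasDerivAt_of_tendsto' hderiv f'int hftop
  rw [hf'] at H
  rw [integral_add ((intJ hc hb m).const_mul (c / m)) (intJ hc hb (m + 1)),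
    integral_const_mul] at H
  have hf0 : f 0 = -((m:ℝ))⁻¹ * (b ^ m)⁻¹ := by simp [hf]
  rw [hf0] at H
  have hJm : (∫ l in Ioi (0:ℝ), Real.exp (-(c * l)) / (l + b) ^ m) = J c b m := rfl
  have hJm1 : (∫ l in Ioi (0:ℝ), Real.exp (-(c * l)) / (l + b) ^ (m+1)) = J c b (m+1) := rfl
  rw [hJm, hJm1] at H
  have : c / m * J c b m + J c b (m + 1) = (b ^ m)⁻¹ / m := by
    rw [H]; field_simp; ring
  linarith


lemma Klem {c b : ℝ} (hc : 0 < c) (hb : 0 < b) (n : ℕ) :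
    ∫ l in Ioi (0:ℝ), l ^ n * Real.exp (-(c * l)) / (l + b) ^ 1
      = (n.factorial : ℝ) * b ^ n / c ^ n * J c b (n + 1) := by
  induction n with
  | zero =>
    simp only [pow_zero, one_mul, Nat.factorial_zero, Nat.cast_one, mul_one, pow_zero,
      one_div, div_one]
    rw [J]
  | succ n ih =>
    have hsplit : ∀ l ∈ Ioi (0:ℝ),
        l ^ (n+1) * Real.exp (-(c * l)) / (l + b) ^ 1
          = l ^ n * Real.exp (-(c * l)) - b * (l ^ n * Real.exp (-(c * l)) / (l + b) ^ 1) := by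
      intro l hl
      have hl0 : (0:ℝ) < l := hl
      have hlb : l + b ≠ 0 := by positivity
      field_simp
      ring
    rw [setIntegral_congr_fun measurableSet_Ioi hsplit]
    have hint1 : IntegrableOn (fun l : ℝ => l ^ n * Real.exp (-(c * l))) (Ioi 0) := by
      have := intOn hc hb n 0
      simpa using this
    have hint2 : IntegrableOn
        (fun l : ℝ => b * (l ^ n * Real.exp (-(c * l)) / (l + b) ^ 1)) (Ioi 0) :=
      (intOn hc hb n 1).const_mul b
    rw [integral_sub hint1 hint2, integral_const_mul, polyExp hc, ih]
    have hJ := Jrec hc hb (n + 1) (Nat.succ_pos n)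
    rw [hJ]
    have hc' : c ≠ 0 := hc.ne'
    have hb' : b ≠ 0 := hb.ne'
    have hn1 : ((n:ℝ) + 1) ≠ 0 := by positivity
    rw [Nat.factorial_succ]
    push_cast
    field_simp
    ring

lemma Ilem {c b : ℝ} (hc : 0 < c) (hb : 0 < b) (n : ℕ) (hn : 1 ≤ n) :
    ∫ l in Ioi (0:ℝ), l ^ n * Real.exp (-(c * l)) / (l + b) ^ 2
      = ((n-1).factorial : ℝ) / c ^ (n - 1) * (((n:ℝ) + c * b) * b ^ (n-1) * J c b n - 1) := by
  induction n, hn using Nat.le_induction with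
  | base =>
    have hsplit : ∀ l ∈ Ioi (0:ℝ),
        l ^ 1 * Real.exp (-(c * l)) / (l + b) ^ 2
          = Real.exp (-(c * l)) / (l + b) ^ 1 - b * (Real.exp (-(c * l)) / (l + b) ^ 2) := by
      intro l hl
      have hl0 : (0:ℝ) < l := hl
      have hlb : l + b ≠ 0 := by positivity
      field_simp
      ring
    rw [setIntegral_congr_fun measurableSet_Ioi hsplit]
    rw [integral_sub (intJ hc hb 1) ((intJ hc hb 2).const_mul b), integral_const_mul]
    have hJ1 : (∫ l in Ioi (0:ℝ), Real.exp (-(c * l)) / (l + b) ^ 1) = J c b 1 := rfl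
    have hJ2 : (∫ l in Ioi (0:ℝ), Real.exp (-(c * l)) / (l + b) ^ 2) = J c b 2 := rfl
    rw [hJ1, hJ2, Jrec hc hb 1 one_pos]
    have hb' : b ≠ 0 := hb.ne'
    norm_num
    field_simp
    ring
  | succ n hn ih =>
    obtain ⟨m, rfl⟩ : ∃ m, n = m + 1 := ⟨n - 1, (Nat.succ_pred_eq_of_pos hn).symm⟩
    have hsplit : ∀ l ∈ Ioi (0:ℝ),
        l ^ (m + 1 + 1) * Real.exp (-(c * l)) / (l + b) ^ 2
          = l ^ (m+1) * Real.exp (-(c * l)) / (l + b) ^ 1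
            - b * (l ^ (m+1) * Real.exp (-(c * l)) / (l + b) ^ 2) := by
      intro l hl
      have hl0 : (0:ℝ) < l := hl
      have hlb : l + b ≠ 0 := by positivity
      field_simp
      ring
    rw [setIntegral_congr_fun measurableSet_Ioi hsplit]
    rw [integral_sub (intOn hc hb (m+1) 1) ((intOn hc hb (m+1) 2).const_mul b),
      integral_const_mul, Klem hc hb (m+1), ih]
    have hJ := Jrec hc hb (m + 1) (Nat.succ_pos m)
    rw [hJ]
    have hc' : c ≠ 0 := hc.ne'
    have hb' : b ≠ 0 := hb.ne'
    have hm1 : ((m:ℝ) + 1) ≠ 0 := by positivity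
    simp only [Nat.add_sub_cancel] at *
    rw [Nat.factorial_succ]
    push_cast
    field_simp
    ring


lemma Elem {c b : ℝ} (hc : 0 < c) (hb : 0 < b) (n : ℕ) (hn : 1 ≤ n) :
    ∫ t in Ioi (1:ℝ), Real.exp (-(c * b * t)) / t ^ n
      = Real.exp (-(c * b)) * b ^ (n - 1) * J c b n := by
  set f : ℝ → ℝ := fun t => Real.exp (-(c * b * t)) / t ^ n with hfdef
  have hshift : ∫ t in Ioi (1:ℝ), f t = ∫ x in Ioi (0:ℝ), f (x + 1) := by
    have h := (measurePreserving_add_right (volume : Measure ℝ) 1).setIntegral_preimage_emb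
      (measurableEmbedding_addRight 1) f (Ioi 1)
    rw [show (· + (1:ℝ)) ⁻¹' (Ioi 1) = Ioi 0 by rw [preimage_add_const_Ioi]; norm_num] at h
    exact h.symm
  have hscale : ∫ x in Ioi (0:ℝ), f (x * b⁻¹ + 1)
      = b * ∫ x in Ioi (0:ℝ), f (x + 1) := by
    have h := integral_comp_mul_right_Ioi (fun x => f (x + 1)) 0 (inv_pos.mpr hb)
    simp only [zero_mul, smul_eq_mul, inv_inv] at h
    exact h
  have hpt : ∀ x ∈ Ioi (0:ℝ), f (x * b⁻¹ + 1)
      = Real.exp (-(c * b)) * b ^ n * (Real.exp (-(c * x)) / (x + b) ^ n) := by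
    intro x hx
    have hx0 : (0:ℝ) < x := hx
    have hxb : (0:ℝ) < x + b := by positivity
    have hxb1 : x * b⁻¹ + 1 = (x + b) / b := by field_simp
    rw [hfdef]
    simp only
    rw [hxb1, div_pow, show -(c * b * ((x + b) / b)) = -(c * x) + -(c * b) by field_simp; ring,
      Real.exp_add]
    field_simp
  have key : ∫ x in Ioi (0:ℝ), f (x * b⁻¹ + 1)
      = Real.exp (-(c * b)) * b ^ n * J c b n := by
    rw [setIntegral_congr_fun measurableSet_Ioi hpt, integral_const_mul, J]
  have hE : ∫ t in Ioi (1:ℝ), f t = b⁻¹ * (Real.exp (-(c * b)) * b ^ n * J c b n) := by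
    rw [hshift, ← key, hscale] at *
    field_simp
  rw [hE]
  obtain ⟨m, rfl⟩ : ∃ m, n = m + 1 := ⟨n - 1, (Nat.succ_pred_eq_of_pos hn).symm⟩
  simp only [Nat.add_sub_cancel]
  rw [pow_succ]
  field_simp



end ExpIntrinsic

end Helpers

open MeasureTheory

/-- Marginal density identity for an i.i.d. Exponential(λ) sample of size `n` with
sample mean `x̄ > 0` under the intrinsic (Scaled Beta 2) prior `π(λ) = b/(λ+b)²`:
`∫₀^∞ λⁿ e^{-nλx̄} b/(λ+b)² dλ
  = (b Γ(n)/(nx̄)^{n-1}) (n(x̄b+1) e^{nx̄b} E_n(nx̄b) - 1)`,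
where `E_n(c) = ∫₁^∞ e^{-ct} t^{-n} dt` is the exponential integral function. -/
theorem exponential_intrinsic_marginal (n : ℕ) (hn : 1 ≤ n) (xbar b : ℝ)
    (hx : 0 < xbar) (hb : 0 < b) :
    ∫ l in Set.Ioi (0 : ℝ), l ^ n * Real.exp (-(n * l * xbar)) * (b / (l + b) ^ 2) =
      b * Real.Gamma n / (n * xbar) ^ (n - 1) *
        ((n : ℝ) * (xbar * b + 1) * Real.exp (n * xbar * b) *
            (∫ t in Set.Ioi (1 : ℝ), Real.exp (-(n * xbar * b * t)) / t ^ n) - 1) := by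
  have hn0 : (0:ℝ) < (n:ℝ) := by exact_mod_cast Nat.lt_of_lt_of_le Nat.zero_lt_one hn
  have hc : (0:ℝ) < (n:ℝ) * xbar := by positivity
  have hrw : ∀ l ∈ Set.Ioi (0:ℝ),
      l ^ n * Real.exp (-(n * l * xbar)) * (b / (l + b) ^ 2)
        = b * (l ^ n * Real.exp (-(((n:ℝ) * xbar) * l)) / (l + b) ^ 2) := by
    intro l hl
    rw [show -((n:ℝ) * l * xbar) = -(((n:ℝ) * xbar) * l) by ring]
    ring
  rw [MeasureTheory.setIntegral_congr_fun measurableSet_Ioi hrw, MeasureTheory.integral_const_mul,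
    ExpIntrinsic.Ilem hc hb n hn, ExpIntrinsic.Elem hc hb n hn]
  have hG : Real.Gamma n = ((n - 1).factorial : ℝ) := by
    obtain ⟨m, rfl⟩ : ∃ m, n = m + 1 := ⟨n - 1, (Nat.succ_pred_eq_of_pos hn).symm⟩
    rw [show ((m + 1 : ℕ) : ℝ) = (m:ℝ) + 1 by push_cast; ring, Real.Gamma_nat_eq_factorial]
    simp
  rw [hG, Real.exp_neg]
  have hcn : ((n:ℝ) * xbar) ^ (n - 1) ≠ 0 := by positivity
  have hexp : Real.exp ((n:ℝ) * xbar * b) ≠ 0 := Real.exp_ne_zero _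
  field_simp
  ring
end
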